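/- arXiv:1608.02581 — 6 statements merged into one kernel-verified Lean document; each statement's English description precedes it below -/
import Mathlib

section
/- Let F be a continuous real-valued function on a closed bounded interval [a,b] with least concave majorant F̂, and let Z_F = {x ∈ [a,b] : F̂(x) = F(x)}. If J is a connected component of [a,b] \ Z_F with closure having endpoints α < β, then on [α,β] the function F̂ equals the affine function l interpolating F at α and β, i.e. F̂(x) = F(α) + (x−α)(F(β)−F(α))/(β−α) for all x ∈ [α,β]. -/
open Set

/-- The least concave majorant of `F` on `[a, b]`. -/
noncomputable def leastConcaveMajorant (a b : ℝ) (F : ℝ → ℝ) (x : ℝ) : ℝ :=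
  sInf {y : ℝ | ∃ G : ℝ → ℝ, ConcaveOn ℝ (Set.Icc a b) G ∧
    (∀ z ∈ Set.Icc a b, F z ≤ G z) ∧ y = G x}

section helpers

variable {a b : ℝ} {F : ℝ → ℝ}

lemma lcm_nonempty (hF : ContinuousOn F (Set.Icc a b)) (x : ℝ) :
    {y : ℝ | ∃ G : ℝ → ℝ, ConcaveOn ℝ (Set.Icc a b) G ∧
      (∀ z ∈ Set.Icc a b, F z ≤ G z) ∧ y = G x}.Nonempty :=
  ⟨sSup (F '' Icc a b), fun _ => sSup (F '' Icc a b), concaveOn_const _ (convex_Icc a b),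
    fun z hz => le_csSup (isCompact_Icc.bddAbove_image hF) (mem_image_of_mem F hz), rfl⟩

lemma lcm_bddBelow {x : ℝ} (hx : x ∈ Set.Icc a b) :
    BddBelow {y : ℝ | ∃ G : ℝ → ℝ, ConcaveOn ℝ (Set.Icc a b) G ∧
      (∀ z ∈ Set.Icc a b, F z ≤ G z) ∧ y = G x} := by
  refine ⟨F x, fun y hy => ?_⟩
  obtain ⟨G, _, hGF, rfl⟩ := hy
  exact hGF x hx

lemma lcm_le {G : ℝ → ℝ} (hG : ConcaveOn ℝ (Set.Icc a b) G)
    (hGF : ∀ z ∈ Set.Icc a b, F z ≤ G z) {x : ℝ} (hx : x ∈ Set.Icc a b) :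
    leastConcaveMajorant a b F x ≤ G x :=
  csInf_le (lcm_bddBelow hx) ⟨G, hG, hGF, rfl⟩

lemma le_lcm (hF : ContinuousOn F (Set.Icc a b)) {x : ℝ} (hx : x ∈ Set.Icc a b) :
    F x ≤ leastConcaveMajorant a b F x := by
  refine le_csInf (lcm_nonempty hF x) ?_
  rintro y ⟨G, _, hGF, rfl⟩
  exact hGF x hx

lemma lcm_concave (hF : ContinuousOn F (Set.Icc a b)) :
    ConcaveOn ℝ (Set.Icc a b) (leastConcaveMajorant a b F) := by
  refine ⟨convex_Icc a b, fun x hx y hy p q hp hq hpq => ?_⟩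
  refine le_csInf (lcm_nonempty hF _) ?_
  rintro w ⟨G, hG, hGF, rfl⟩
  calc p • leastConcaveMajorant a b F x + q • leastConcaveMajorant a b F y
      ≤ p • G x + q • G y := by
        have h1 := lcm_le hG hGF hx
        have h2 := lcm_le hG hGF hy
        simp only [smul_eq_mul]
        nlinarith
    _ ≤ G (p • x + q • y) := hG.2 hx hy hp hq hpq

lemma affine_concaveOn {s : Set ℝ} (hs : Convex ℝ s) (p q : ℝ) :
    ConcaveOn ℝ s (fun x => p + q * x) := by
  refine ⟨hs, fun x _ y _ r u hr hu hru => le_of_eq ?_⟩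
  simp only [smul_eq_mul]
  linear_combination p * hru

lemma concaveOn_min {s : Set ℝ} {f g : ℝ → ℝ} (hf : ConcaveOn ℝ s f) (hg : ConcaveOn ℝ s g) :
    ConcaveOn ℝ s (fun x => min (f x) (g x)) := hf.inf hg

lemma lcm_eq_left (hab : a ≤ b) (hF : ContinuousOn F (Set.Icc a b)) :
    leastConcaveMajorant a b F a = F a := by
  have ha : a ∈ Icc a b := left_mem_Icc.mpr hab
  refine le_antisymm ?_ (le_lcm hF ha)
  refine le_of_forall_pos_le_add fun ε hε => ?_
  obtain ⟨δ, hδ, hδ'⟩ := Metric.continuousWithinAt_iff.mp (hF a ha) ε hε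
  set M0 := sSup (F '' Icc a b) with hM0def
  have hM0 : ∀ z ∈ Icc a b, F z ≤ M0 := fun z hz =>
    le_csSup (isCompact_Icc.bddAbove_image hF) (mem_image_of_mem F hz)
  have haM0 : F a ≤ M0 := hM0 a ha
  set K := (M0 - F a) / (δ / 2) with hKdef
  have hK : 0 ≤ K := div_nonneg (by linarith) (by linarith)
  set G : ℝ → ℝ := fun x => min (M0 + ε) (F a + ε + K * (x - a)) with hGdef
  have hGconc : ConcaveOn ℝ (Icc a b) G := by
    have h1 : ConcaveOn ℝ (Icc a b) (fun _ : ℝ => M0 + ε) := concaveOn_const _ (convex_Icc a b)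
    have h2 : ConcaveOn ℝ (Icc a b) (fun x => (F a + ε - K * a) + K * x) :=
      affine_concaveOn (convex_Icc a b) _ _
    have := concaveOn_min h1 h2
    refine this.congr fun x _ => ?_
    simp only [hGdef]; ring_nf
  have hGF : ∀ z ∈ Icc a b, F z ≤ G z := by
    intro z hz
    rcases lt_or_ge (z - a) (δ / 2) with h | h
    · have hdist : dist z a < δ := by
        rw [Real.dist_eq, abs_of_nonneg (by linarith [hz.1] : (0:ℝ) ≤ z - a)]; linarith
      have := hδ' hz hdist
      rw [Real.dist_eq] at this
      have hFz : F z < F a + ε := by cases abs_lt.mp this; linarith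
      refine le_min (by linarith [hM0 z hz]) ?_
      nlinarith [hz.1]
    · refine le_min (by linarith [hM0 z hz]) ?_
      have : K * (z - a) ≥ M0 - F a := by
        rw [hKdef]
        rcases eq_or_lt_of_le haM0 with he | hlt
        · rw [← he]; simp
        · rw [div_mul_eq_mul_div, ge_iff_le, le_div_iff₀ (by linarith)]
          nlinarith
      linarith [hM0 z hz]
  have := lcm_le hGconc hGF ha
  simp only [hGdef] at this
  calc leastConcaveMajorant a b F a ≤ min (M0 + ε) (F a + ε + K * (a - a)) := this
    _ ≤ F a + ε + K * (a - a) := min_le_right _ _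
    _ = F a + ε := by ring

lemma lcm_eq_right (hab : a ≤ b) (hF : ContinuousOn F (Set.Icc a b)) :
    leastConcaveMajorant a b F b = F b := by
  have hb : b ∈ Icc a b := right_mem_Icc.mpr hab
  refine le_antisymm ?_ (le_lcm hF hb)
  refine le_of_forall_pos_le_add fun ε hε => ?_
  obtain ⟨δ, hδ, hδ'⟩ := Metric.continuousWithinAt_iff.mp (hF b hb) ε hε
  set M0 := sSup (F '' Icc a b) with hM0def
  have hM0 : ∀ z ∈ Icc a b, F z ≤ M0 := fun z hz =>
    le_csSup (isCompact_Icc.bddAbove_image hF) (mem_image_of_mem F hz)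
  have hbM0 : F b ≤ M0 := hM0 b hb
  set K := (M0 - F b) / (δ / 2) with hKdef
  have hK : 0 ≤ K := div_nonneg (by linarith) (by linarith)
  set G : ℝ → ℝ := fun x => min (M0 + ε) (F b + ε + K * (b - x)) with hGdef
  have hGconc : ConcaveOn ℝ (Icc a b) G := by
    have h1 : ConcaveOn ℝ (Icc a b) (fun _ : ℝ => M0 + ε) := concaveOn_const _ (convex_Icc a b)
    have h2 : ConcaveOn ℝ (Icc a b) (fun x => (F b + ε + K * b) + (-K) * x) :=
      affine_concaveOn (convex_Icc a b) _ _
    have := concaveOn_min h1 h2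
    refine this.congr fun x _ => ?_
    simp only [hGdef]; ring_nf
  have hGF : ∀ z ∈ Icc a b, F z ≤ G z := by
    intro z hz
    rcases lt_or_ge (b - z) (δ / 2) with h | h
    · have hdist : dist z b < δ := by
        rw [Real.dist_eq, abs_of_nonpos (by linarith [hz.2] : z - b ≤ 0)]; linarith
      have := hδ' hz hdist
      rw [Real.dist_eq] at this
      have hFz : F z < F b + ε := by cases abs_lt.mp this; linarith
      refine le_min (by linarith [hM0 z hz]) ?_
      nlinarith [hz.2]
    · refine le_min (by linarith [hM0 z hz]) ?_
      have : K * (b - z) ≥ M0 - F b := by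
        rw [hKdef]
        rcases eq_or_lt_of_le hbM0 with he | hlt
        · rw [← he]; simp
        · rw [div_mul_eq_mul_div, ge_iff_le, le_div_iff₀ (by linarith)]
          nlinarith
      linarith [hM0 z hz]
  have := lcm_le hGconc hGF hb
  simp only [hGdef] at this
  calc leastConcaveMajorant a b F b ≤ min (M0 + ε) (F b + ε + K * (b - b)) := this
    _ ≤ F b + ε + K * (b - b) := min_le_right _ _
    _ = F b + ε := by ring

lemma concave_3pt {C : ℝ → ℝ} (hC : ConcaveOn ℝ (Set.Icc a b) C) {x z : ℝ}
    (hx : x ∈ Set.Icc a b) (hz : z ∈ Set.Icc a b) (hxz : x < z) {y : ℝ}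
    (hxy : x ≤ y) (hyz : y ≤ z) :
    (z - y) * C x + (y - x) * C z ≤ (z - x) * C y := by
  have hD : 0 < z - x := by linarith
  have h1 : (0:ℝ) ≤ (z - y) / (z - x) := div_nonneg (by linarith) hD.le
  have h2 : (0:ℝ) ≤ (y - x) / (z - x) := div_nonneg (by linarith) hD.le
  have h3 : (z - y) / (z - x) + (y - x) / (z - x) = 1 := by field_simp; ring
  have h4 := hC.2 hx hz h1 h2 h3
  have h5 : ((z - y) / (z - x)) • x + ((y - x) / (z - x)) • z = y := by
    simp only [smul_eq_mul]; field_simp <;> ring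
  rw [h5, smul_eq_mul, smul_eq_mul] at h4
  have := mul_le_mul_of_nonneg_left h4 hD.le
  calc (z - y) * C x + (y - x) * C z
      = (z - x) * ((z - y) / (z - x) * C x + (y - x) / (z - x) * C z) := by
        field_simp <;> ring
    _ ≤ (z - x) * C y := this

lemma conc_chord {C : ℝ → ℝ} (hC : ConcaveOn ℝ (Set.Icc a b) C) {p q x y z : ℝ}
    (hx : x ∈ Set.Icc a b) (hz : z ∈ Set.Icc a b) (hxy : x ≤ y) (hyz : y ≤ z)
    (h1 : p + q * x ≤ C x) (h2 : p + q * z ≤ C z) : p + q * y ≤ C y := by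
  rcases eq_or_lt_of_le (hxy.trans hyz) with he | hlt
  · have hxy' : x = y := le_antisymm hxy (by linarith)
    rw [← hxy']; exact h1
  · have h3 := concave_3pt hC hx hz hlt hxy hyz
    nlinarith [mul_le_mul_of_nonneg_left h1 (by linarith : (0:ℝ) ≤ z - y),
      mul_le_mul_of_nonneg_left h2 (by linarith : (0:ℝ) ≤ y - x)]

lemma conc_sec_left {C : ℝ → ℝ} (hC : ConcaveOn ℝ (Set.Icc a b) C) {p q x y z : ℝ}
    (hx : x ∈ Set.Icc a b) (hz : z ∈ Set.Icc a b) (hxy : x ≤ y) (hyz : y < z)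
    (h1 : C y ≤ p + q * y) (h2 : p + q * z ≤ C z) : C x ≤ p + q * x := by
  rcases eq_or_lt_of_le hxy with he | hlt
  · rw [he]; exact h1
  · have h3 := concave_3pt hC hx hz (hlt.trans hyz) hxy hyz.le
    have hzy : (0:ℝ) < z - y := by linarith
    nlinarith [mul_le_mul_of_nonneg_left h1 (by linarith : (0:ℝ) ≤ z - x),
      mul_le_mul_of_nonneg_left h2 (by linarith : (0:ℝ) ≤ y - x)]

lemma conc_sec_right {C : ℝ → ℝ} (hC : ConcaveOn ℝ (Set.Icc a b) C) {p q u v w : ℝ}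
    (hu : u ∈ Set.Icc a b) (hw : w ∈ Set.Icc a b) (huv : u < v) (hvw : v ≤ w)
    (h1 : C v ≤ p + q * v) (h2 : p + q * u ≤ C u) : C w ≤ p + q * w := by
  rcases eq_or_lt_of_le hvw with he | hlt
  · rw [← he]; exact h1
  · have h3 := concave_3pt hC hu hw (huv.trans hlt) huv.le hvw
    have hvu : (0:ℝ) < v - u := by linarith
    nlinarith [mul_le_mul_of_nonneg_left h1 (by linarith : (0:ℝ) ≤ w - u),
      mul_le_mul_of_nonneg_left h2 (by linarith : (0:ℝ) ≤ w - v)]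

end helpers

theorem stmt2 (a b : ℝ) (hab : a < b) (F : ℝ → ℝ)
    (hF : ContinuousOn F (Set.Icc a b))
    (Z : Set ℝ)
    (hZ : Z = {x ∈ Set.Icc a b | leastConcaveMajorant a b F x = F x})
    (J : Set ℝ) (t : ℝ) (ht : t ∈ Set.Icc a b \ Z)
    (hJ : J = connectedComponentIn (Set.Icc a b \ Z) t)
    (α β : ℝ) (hαβ : α < β) (hclos : closure J = Set.Icc α β) :
    ∀ x ∈ Set.Icc α β,
      leastConcaveMajorant a b F x =
        F α + (x - α) * (F β - F α) / (β - α) := by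
  set C := leastConcaveMajorant a b F with hCdef
  set U := Set.Icc a b \ Z with hUdef
  have hconc : ConcaveOn ℝ (Set.Icc a b) C := lcm_concave hF
  have hFle : ∀ z ∈ Icc a b, F z ≤ C z := fun z hz => le_lcm hF hz
  have hmemZ : ∀ y : ℝ, y ∈ Z ↔ y ∈ Icc a b ∧ C y = F y := by
    intro y; rw [hZ]; exact mem_sep_iff
  have hUlt : ∀ y ∈ U, F y < C y := by
    intro y hy
    rcases lt_or_eq_of_le (hFle y hy.1) with h | h
    · exact h
    · exact absurd ((hmemZ y).mpr ⟨hy.1, h.symm⟩) hy.2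
  -- basic topology of J
  have hJt : t ∈ J := hJ ▸ mem_connectedComponentIn ht
  have hJU : J ⊆ U := hJ ▸ connectedComponentIn_subset _ _
  have hJconn : IsConnected J := hJ ▸ isConnected_connectedComponentIn_iff.mpr ht
  have hJIcc : J ⊆ Icc α β := hclos ▸ subset_closure
  have hsubIcc : Icc α β ⊆ Icc a b := by
    rw [← hclos]
    exact closure_minimal (hJU.trans diff_subset) isClosed_Icc
  have hαI : α ∈ Icc a b := hsubIcc (left_mem_Icc.mpr hαβ.le)
  have hβI : β ∈ Icc a b := hsubIcc (right_mem_Icc.mpr hαβ.le)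
  -- the open interval is inside J
  have hIoo : Ioo α β ⊆ J := by
    intro x hx
    have hord : J.OrdConnected := hJconn.isPreconnected.ordConnected
    have h1 : ∃ j ∈ J, j < x := by
      by_contra h
      push_neg at h
      have : closure J ⊆ Ici x := closure_minimal (fun j hj => h j hj) isClosed_Ici
      have := this (hclos ▸ (left_mem_Icc.mpr hαβ.le : α ∈ Icc α β))
      exact absurd this (not_le.mpr hx.1)
    have h2 : ∃ j ∈ J, x < j := by
      by_contra h
      push_neg at h
      have : closure J ⊆ Iic x := closure_minimal (fun j hj => h j hj) isClosed_Iic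
      have := this (hclos ▸ (right_mem_Icc.mpr hαβ.le : β ∈ Icc α β))
      exact absurd this (not_le.mpr hx.2)
    obtain ⟨j₁, hj₁, hj₁x⟩ := h1
    obtain ⟨j₂, hj₂, hj₂x⟩ := h2
    exact hord.out hj₁ hj₂ ⟨hj₁x.le, hj₂x.le⟩
  -- both endpoints belong to Z
  have hmaximal : ∀ s : Set ℝ, IsPreconnected s → J ⊆ s → s ⊆ U → s ⊆ J := by
    intro s hs hJs hsU
    rw [hJ]
    exact hs.subset_connectedComponentIn (hJs hJt) hsU
  have hαZ : C α = F α := by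
    by_contra hne
    have hαU : α ∈ U := ⟨hαI, fun hz => hne ((hmemZ α).mp hz).2⟩
    have hαJ : α ∈ J := by
      have hK : IsConnected (insert α J) :=
        hJconn.subset_closure (subset_insert _ _)
          (insert_subset (hclos ▸ (left_mem_Icc.mpr hαβ.le : α ∈ Icc α β)) subset_closure)
      exact hmaximal _ hK.isPreconnected (subset_insert _ _)
        (insert_subset hαU hJU) (mem_insert _ _)
    rcases eq_or_lt_of_le hαI.1 with he | haα
    · exact hne (he ▸ lcm_eq_left hab.le hF)
    · -- α is interior on the left; C - F is "lower semicontinuous" there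
      have hd₀ : F α < C α := hUlt α hαU
      set d₀ := C α - F α with hd₀def
      have hd₀pos : 0 < d₀ := by simp only [hd₀def]; linarith
      obtain ⟨η, hη, hη'⟩ := Metric.continuousWithinAt_iff.mp (hF α hαI) (d₀/4) (by linarith)
      set w := max a (α - η/2) with hwdef
      have hwa : a ≤ w := le_max_left _ _
      have hwα : w < α := max_lt haα (by linarith)
      have hwη : |w - α| < η := by
        rw [abs_of_nonpos (by linarith)]
        have : α - η/2 ≤ w := le_max_right _ _
        linarith
      have hwI : w ∈ Icc a b := ⟨hwa, by linarith [hαI.2]⟩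
      have hFw : F α - d₀/4 < F w := by
        have := hη' hwI (by rwa [Real.dist_eq])
        rw [Real.dist_eq] at this
        cases abs_lt.mp this; linarith
      set δ := (α - w)/2 with hδdef
      have hδpos : 0 < δ := by simp only [hδdef]; linarith
      have hIocU : Ioc (α - δ) α ⊆ U := by
        intro s hs
        have hsI : s ∈ Icc a b := ⟨by have := hs.1; simp only [hδdef] at this; linarith,
          le_trans hs.2 hαI.2⟩
        rcases eq_or_lt_of_le hs.2 with he | hsα
        · exact he ▸ hαU
        · -- s < α : show F s < C s
          have hws : w ≤ s := by have := hs.1; simp only [hδdef] at this; linarith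
          have h3pt := concave_3pt hconc hwI hαI hwα hws hsα.le
          have hCα : C α = F α + d₀ := by simp only [hd₀def]; ring
          rw [hCα] at h3pt
          have hFs : F s < F α + d₀/4 := by
            have hds : dist s α < η := by
              rw [Real.dist_eq, abs_of_nonpos (by linarith)]
              have := hs.1; simp only [hδdef] at this
              have : |w - α| < η := hwη
              rw [abs_of_nonpos (by linarith)] at this
              linarith [hs.1]
            have := hη' hsI hds
            rw [Real.dist_eq] at this
            cases abs_lt.mp this; linarith
          have hCw : F w ≤ C w := hFle w hwI
          have hkey : (α - w) * F s < (α - w) * C s := by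
            nlinarith [h3pt,
              mul_le_mul_of_nonneg_left (show F α - d₀/4 ≤ C w by linarith)
                (show (0:ℝ) ≤ α - s by linarith),
              mul_le_mul_of_nonneg_right (show (α - w)/2 ≤ s - w by
                have := hs.1; simp only [hδdef] at this; linarith) hd₀pos.le,
              mul_le_mul_of_nonneg_right (show α - s ≤ (α - w)/2 by
                have := hs.1; simp only [hδdef] at this; linarith) hd₀pos.le,
              mul_lt_mul_of_pos_left hFs (show (0:ℝ) < α - w by linarith)]
          have hFCs : F s < C s := lt_of_mul_lt_mul_left hkey (by linarith)
          exact ⟨hsI, fun hz => absurd ((hmemZ s).mp hz).2 (ne_of_gt hFCs)⟩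
      -- extend J to the left: contradiction
      have hK2 : IsConnected (J ∪ Ioc (α - δ) α) :=
        IsConnected.union ⟨α, hαJ, by constructor <;> [linarith; rfl]⟩ hJconn
          ⟨⟨α, by constructor <;> [linarith; rfl]⟩, isPreconnected_Ioc⟩
      have := hmaximal _ hK2.isPreconnected subset_union_left
        (union_subset hJU hIocU)
      have hmem : α - δ/2 ∈ J := this (Or.inr ⟨by linarith, by linarith⟩)
      have := (hJIcc hmem).1
      linarith
  have hβZ : C β = F β := by
    by_contra hne
    have hβU : β ∈ U := ⟨hβI, fun hz => hne ((hmemZ β).mp hz).2⟩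
    have hβJ : β ∈ J := by
      have hK : IsConnected (insert β J) :=
        hJconn.subset_closure (subset_insert _ _)
          (insert_subset (hclos ▸ (right_mem_Icc.mpr hαβ.le : β ∈ Icc α β)) subset_closure)
      exact hmaximal _ hK.isPreconnected (subset_insert _ _)
        (insert_subset hβU hJU) (mem_insert _ _)
    rcases eq_or_lt_of_le hβI.2 with he | hβb
    · exact hne (he ▸ lcm_eq_right hab.le hF)
    · have hd₀ : F β < C β := hUlt β hβU
      set d₀ := C β - F β with hd₀def
      have hd₀pos : 0 < d₀ := by simp only [hd₀def]; linarith
      obtain ⟨η, hη, hη'⟩ := Metric.continuousWithinAt_iff.mp (hF β hβI) (d₀/4) (by linarith)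
      set w := min b (β + η/2) with hwdef
      have hwb : w ≤ b := min_le_left _ _
      have hwβ : β < w := lt_min hβb (by linarith)
      have hwη : |w - β| < η := by
        rw [abs_of_nonneg (by linarith)]
        have : w ≤ β + η/2 := min_le_right _ _
        linarith
      have hwI : w ∈ Icc a b := ⟨by linarith [hβI.1], hwb⟩
      have hFw : F β - d₀/4 < F w := by
        have := hη' hwI (by rwa [Real.dist_eq])
        rw [Real.dist_eq] at this
        cases abs_lt.mp this; linarith
      set δ := (w - β)/2 with hδdef
      have hδpos : 0 < δ := by simp only [hδdef]; linarith
      have hIcoU : Ico β (β + δ) ⊆ U := by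
        intro s hs
        have hsI : s ∈ Icc a b := ⟨le_trans hβI.1 hs.1,
          by have := hs.2; simp only [hδdef] at this; linarith⟩
        rcases eq_or_lt_of_le hs.1 with he | hβs
        · exact he ▸ hβU
        · have hsw : s ≤ w := by have := hs.2; simp only [hδdef] at this; linarith
          have h3pt := concave_3pt hconc hβI hwI hwβ hβs.le hsw
          have hCβ : C β = F β + d₀ := by simp only [hd₀def]; ring
          rw [hCβ] at h3pt
          have hFs : F s < F β + d₀/4 := by
            have hds : dist s β < η := by
              rw [Real.dist_eq, abs_of_nonneg (by linarith)]
              have h2 := hs.2; simp only [hδdef] at h2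
              have h3 : |w - β| < η := hwη
              rw [abs_of_nonneg (by linarith)] at h3
              linarith
            have := hη' hsI hds
            rw [Real.dist_eq] at this
            cases abs_lt.mp this; linarith
          have hCw : F w ≤ C w := hFle w hwI
          have hkey : (w - β) * F s < (w - β) * C s := by
            nlinarith [h3pt,
              mul_le_mul_of_nonneg_left (show F β - d₀/4 ≤ C w by linarith)
                (show (0:ℝ) ≤ s - β by linarith),
              mul_le_mul_of_nonneg_right (show (w - β)/2 ≤ w - s by
                have := hs.2; simp only [hδdef] at this; linarith) hd₀pos.le,
              mul_le_mul_of_nonneg_right (show s - β ≤ (w - β)/2 by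
                have := hs.2; simp only [hδdef] at this; linarith) hd₀pos.le,
              mul_lt_mul_of_pos_left hFs (show (0:ℝ) < w - β by linarith)]
          have hFCs : F s < C s := lt_of_mul_lt_mul_left hkey (by linarith)
          exact ⟨hsI, fun hz => absurd ((hmemZ s).mp hz).2 (ne_of_gt hFCs)⟩
      have hK2 : IsConnected (J ∪ Ico β (β + δ)) :=
        IsConnected.union ⟨β, hβJ, by constructor <;> [rfl; linarith]⟩ hJconn
          ⟨⟨β, by constructor <;> [rfl; linarith]⟩, isPreconnected_Ico⟩
      have := hmaximal _ hK2.isPreconnected subset_union_left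
        (union_subset hJU hIcoU)
      have hmem : β + δ/2 ∈ J := this (Or.inr ⟨by linarith, by linarith⟩)
      have := (hJIcc hmem).2
      linarith
  -- the affine interpolant
  set q : ℝ := (F β - F α) / (β - α) with hqdef
  set p : ℝ := F α - α * q with hpdef
  have hβα : β - α ≠ 0 := by linarith
  have hAα : p + q * α = F α := by simp only [hpdef]; ring
  have hAβ : p + q * β = F β := by
    simp only [hpdef, hqdef]; field_simp; ring
  have hCαA : C α = p + q * α := by rw [hAα, hαZ]
  have hCβA : C β = p + q * β := by rw [hAβ, hβZ]
  -- C is below the extended secant outside [α, β]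
  have houter : ∀ z ∈ Icc a b, z ≤ α ∨ β ≤ z → C z ≤ p + q * z := by
    rintro z hz (h | h)
    · exact conc_sec_left hconc hz hβI h hαβ hCαA.le hCβA.ge
    · exact conc_sec_right hconc hαI hz hαβ h hCβA.le hCαA.ge
  -- C is above the secant on [α, β]
  have hlower : ∀ x ∈ Icc α β, p + q * x ≤ C x := fun x hx =>
    conc_chord hconc hαI hβI hx.1 hx.2 hCαA.ge hCβA.ge
  -- F is below the secant on [α, β]
  have hFA : ∀ y ∈ Icc α β, F y ≤ p + q * y := by
    have hcont : ContinuousOn (fun y => F y - (p + q * y)) (Icc α β) :=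
      (hF.mono hsubIcc).sub
        ((continuous_const.add (continuous_const.mul continuous_id)).continuousOn)
    obtain ⟨xs, hxs, hmax⟩ := isCompact_Icc.exists_isMaxOn
      (nonempty_Icc.mpr hαβ.le) hcont
    set d := F xs - (p + q * xs) with hddef
    rcases le_or_gt d 0 with hd | hd
    · intro y hy
      have h1 := hmax hy
      simp only [mem_setOf_eq] at h1
      linarith
    · exfalso
      have hxsα : xs ≠ α := by
        intro he; rw [hddef, he, hAα] at hd; linarith
      have hxsβ : xs ≠ β := by
        intro he; rw [hddef, he, hAβ] at hd; linarith
      have hxsJ : xs ∈ Ioo α β :=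
        ⟨lt_of_le_of_ne hxs.1 (Ne.symm hxsα), lt_of_le_of_ne hxs.2 hxsβ⟩
      have hxsU : xs ∈ U := hJU (hIoo hxsJ)
      have hlt : F xs < C xs := hUlt xs hxsU
      set G : ℝ → ℝ := fun y => min (C y) ((p + d) + q * y) with hGdef
      have hGconc : ConcaveOn ℝ (Icc a b) G :=
        concaveOn_min hconc (affine_concaveOn (convex_Icc a b) _ _)
      have hGF : ∀ z ∈ Icc a b, F z ≤ G z := by
        intro z hz
        refine le_min (hFle z hz) ?_
        rcases le_or_gt z α with h | h
        · linarith [houter z hz (Or.inl h), hFle z hz]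
        · rcases le_or_gt β z with h' | h'
          · linarith [houter z hz (Or.inr h'), hFle z hz]
          · have h1 := hmax (show z ∈ Icc α β from ⟨h.le, h'.le⟩)
            simp only [mem_setOf_eq] at h1
            linarith
      have h1 : C xs ≤ G xs := lcm_le hGconc hGF (hsubIcc ⟨hxsJ.1.le, hxsJ.2.le⟩)
      have h2 : G xs ≤ p + d + q * xs := min_le_right _ _
      rw [hddef] at h2
      have : C xs ≤ F xs := by linarith
      linarith
  -- C is below the secant on [α, β]
  have hupper : ∀ x ∈ Icc α β, C x ≤ p + q * x := by
    intro x hx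
    have hGconc : ConcaveOn ℝ (Icc a b) (fun y => min (C y) (p + q * y)) :=
      concaveOn_min hconc (affine_concaveOn (convex_Icc a b) _ _)
    have hGF : ∀ z ∈ Icc a b, F z ≤ min (C z) (p + q * z) := by
      intro z hz
      refine le_min (hFle z hz) ?_
      rcases le_or_gt z α with h | h
      · linarith [houter z hz (Or.inl h), hFle z hz]
      · rcases le_or_gt β z with h' | h'
        · linarith [houter z hz (Or.inr h'), hFle z hz]
        · exact hFA z ⟨h.le, h'.le⟩
    have h1 : C x ≤ min (C x) (p + q * x) := lcm_le hGconc hGF (hsubIcc hx)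
    exact h1.trans (min_le_right _ _)
  intro x hx
  have hrhs : F α + (x - α) * (F β - F α) / (β - α) = p + q * x := by
    simp only [hpdef, hqdef]; field_simp <;> ring
  rw [hrhs]
  exact le_antisymm (hupper x hx) (hlower x hx)
end

section
/- Let F be continuous on [a,b] and differentiable on (a,b) with continuous derivative F' on (a,b), and let F̂ be its least concave majorant. Then the derivative (F̂)' is continuous on (a,b). -/
open Set Filter Topology

namespace LCMaux

variable {a b : ℝ} {F : ℝ → ℝ}

lemma bddBelow_set {x : ℝ} (hx : x ∈ Icc a b) :
    BddBelow {y : ℝ | ∃ G : ℝ → ℝ, ConcaveOn ℝ (Set.Icc a b) G ∧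
      (∀ z ∈ Set.Icc a b, F z ≤ G z) ∧ y = G x} := by
  refine ⟨F x, ?_⟩
  rintro y ⟨G, hG, hmaj, rfl⟩
  exact hmaj x hx

lemma nonempty_set (hab : a ≤ b) (hF : ContinuousOn F (Icc a b)) (x : ℝ) :
    {y : ℝ | ∃ G : ℝ → ℝ, ConcaveOn ℝ (Set.Icc a b) G ∧
      (∀ z ∈ Set.Icc a b, F z ≤ G z) ∧ y = G x}.Nonempty := by
  obtain ⟨z₀, hz₀, hmax⟩ := isCompact_Icc.exists_isMaxOn (nonempty_Icc.2 hab) hF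
  exact ⟨F z₀, fun _ => F z₀, concaveOn_const _ (convex_Icc a b), fun z hz => hmax hz, rfl⟩

lemma lcm_le {G : ℝ → ℝ} (hG : ConcaveOn ℝ (Set.Icc a b) G)
    (hmaj : ∀ z ∈ Set.Icc a b, F z ≤ G z) {x : ℝ} (hx : x ∈ Icc a b) :
    leastConcaveMajorant a b F x ≤ G x :=
  csInf_le (bddBelow_set hx) ⟨G, hG, hmaj, rfl⟩

lemma le_lcm (hab : a ≤ b) (hF : ContinuousOn F (Icc a b)) {x : ℝ} (hx : x ∈ Icc a b) :
    F x ≤ leastConcaveMajorant a b F x := by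
  refine le_csInf (nonempty_set hab hF x) ?_
  rintro y ⟨G, hG, hmaj, rfl⟩
  exact hmaj x hx

lemma concaveOn_lcm (hab : a ≤ b) (hF : ContinuousOn F (Icc a b)) :
    ConcaveOn ℝ (Icc a b) (leastConcaveMajorant a b F) := by
  refine ⟨convex_Icc a b, fun x hx y hy t u ht hu htu => ?_⟩
  refine le_csInf (nonempty_set hab hF _) ?_
  rintro y' ⟨G, hG, hmaj, rfl⟩
  calc t • leastConcaveMajorant a b F x + u • leastConcaveMajorant a b F y
      ≤ t • G x + u • G y := by
        gcongr
        exacts [lcm_le hG hmaj hx, lcm_le hG hmaj hy]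
    _ ≤ G (t • x + u • y) := hG.2 hx hy ht hu htu

lemma concaveOn_affine (p q : ℝ) {s : Set ℝ} (hs : Convex ℝ s) :
    ConcaveOn ℝ s (fun z => p * z + q) := by
  refine ⟨hs, fun x _ y _ t u ht hu htu => ?_⟩
  simp only [smul_eq_mul]
  exact le_of_eq (by linear_combination q * htu)

lemma lcm_exists_hasDerivAt (hab : a < b) (hF : ContinuousOn F (Icc a b))
    (hFdiff : ∀ x ∈ Ioo a b, DifferentiableAt ℝ F x) :
    ∀ x ∈ Ioo a b, ∃ d, HasDerivAt (leastConcaveMajorant a b F) d x := by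
  intro x hx
  set M := leastConcaveMajorant a b F with hMdef
  have hMconc : ConcaveOn ℝ (Icc a b) M := concaveOn_lcm hab.le hF
  have hFleM : ∀ z ∈ Icc a b, F z ≤ M z := fun z hz => le_lcm hab.le hF hz
  have hxI : x ∈ Icc a b := Ioo_subset_Icc_self hx
  have hanti : AntitoneOn (slope M x) (Icc a b \ {x}) := hMconc.slope_anti hxI
  set A := slope M x '' (Ico a x) with hA
  set B := slope M x '' (Ioc x b) with hB
  have hAne : A.Nonempty := ⟨_, mem_image_of_mem _ (⟨le_refl a, hx.1⟩ : a ∈ Ico a x)⟩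
  have hBne : B.Nonempty := ⟨_, mem_image_of_mem _ (⟨hx.2, le_refl b⟩ : b ∈ Ioc x b)⟩
  have hmemA : ∀ w ∈ Ico a x, w ∈ Icc a b \ {x} :=
    fun w hw => ⟨⟨hw.1, hw.2.le.trans hxI.2⟩, hw.2.ne⟩
  have hmemB : ∀ z ∈ Ioc x b, z ∈ Icc a b \ {x} :=
    fun z hz => ⟨⟨hxI.1.trans hz.1.le, hz.2⟩, hz.1.ne'⟩
  have hle : ∀ q ∈ B, ∀ p ∈ A, q ≤ p := by
    rintro q ⟨z, hz, rfl⟩ p ⟨w, hw, rfl⟩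
    exact hanti (hmemA w hw) (hmemB z hz) (hw.2.le.trans hz.1.le)
  have hBbdd : BddAbove B :=
    ⟨slope M x a, fun q hq => hle _ hq _ (mem_image_of_mem _ ⟨le_refl a, hx.1⟩)⟩
  have hAbdd : BddBelow A :=
    ⟨slope M x b, fun p hp => hle _ (mem_image_of_mem _ ⟨hx.2, le_refl b⟩) _ hp⟩
  set Dp := sSup B with hDp
  set Dm := sInf A with hDm
  have hDpDm : Dp ≤ Dm := csSup_le hBne fun q hq => le_csInf hAne fun p hp => hle q hq p hp
  have hslope_le : ∀ z ∈ Ioc x b, slope M x z ≤ Dp :=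
    fun z hz => le_csSup hBbdd (mem_image_of_mem _ hz)
  have hslope_ge : ∀ w ∈ Ico a x, Dm ≤ slope M x w :=
    fun w hw => csInf_le hAbdd (mem_image_of_mem _ hw)
  -- key inequality Dm ≤ Dp
  have hkey : Dm ≤ Dp := by
    have hFxMx : F x ≤ M x := hFleM x hxI
    rcases hFxMx.lt_or_eq with hlt | heq
    · -- non-contact point: corner-cutting argument
      by_contra hcon
      push_neg at hcon
      set m := (Dp + Dm)/2 with hm
      set c := (M x - F x)/4 with hc
      have hcpos : 0 < c := by simp only [hc]; linarith
      have hFx : ContinuousAt F x := hF.continuousAt (Icc_mem_nhds hx.1 hx.2)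
      obtain ⟨r₁, hr₁pos, hr₁⟩ := Metric.continuousAt_iff.1 hFx c hcpos
      set r := min (r₁/2) (c/(|m|+1)) with hr
      have habs : (0:ℝ) < |m| + 1 := by positivity
      have hrpos : 0 < r := lt_min (by linarith) (by positivity)
      have hrr₁ : r < r₁ := (min_le_left _ _).trans_lt (by linarith)
      have hrm : |m| * r ≤ c := by
        have h1 : r ≤ c/(|m|+1) := min_le_right _ _
        have h2 : |m| * r ≤ |m| * (c/(|m|+1)) :=
          mul_le_mul_of_nonneg_left h1 (abs_nonneg m)
        have h3 : |m| * (c/(|m|+1)) ≤ c := by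
          rw [mul_div_assoc', div_le_iff₀ habs]
          nlinarith [abs_nonneg m, hcpos.le]
        linarith
      have hgap : 0 < r*(Dm - Dp)/4 := by
        apply div_pos (mul_pos hrpos (by linarith)) (by norm_num)
      set δ := min c (r*(Dm - Dp)/4) with hδ
      have hδpos : 0 < δ := lt_min hcpos hgap
      have hδc : δ ≤ c := min_le_left _ _
      have hδgap : δ ≤ r*(Dm - Dp)/4 := min_le_right _ _
      set L := fun z => m * z + (M x - δ - m * x) with hLdef
      have hLconc : ConcaveOn ℝ (Icc a b) L := concaveOn_affine _ _ (convex_Icc a b)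
      have hmaj : ∀ z ∈ Icc a b, F z ≤ min (M z) (L z) := by
        intro z hz
        refine le_min (hFleM z hz) ?_
        rcases le_or_gt |z - x| r with hcase | hcase
        · -- middle zone
          have hdist : dist (F z) (F x) < c := hr₁ (by rw [Real.dist_eq]; linarith)
          rw [Real.dist_eq, abs_lt] at hdist
          have habs1 : |m * (z - x)| ≤ |m| * r := by
            rw [abs_mul]
            exact mul_le_mul_of_nonneg_left hcase (abs_nonneg m)
          have habs2 : -(|m| * r) ≤ m * (z - x) := (abs_le.1 habs1).1
          have hLz : L z = M x - δ + m * (z - x) := by simp only [hLdef]; ring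
          rw [hLz]
          have hMx : M x = F x + 4 * c := by simp only [hc]; ring
          linarith [hdist.2]
        · rcases lt_or_gt_of_ne (fun h : z = x => by simp [h] at hcase; linarith) with hzx | hzx
          · -- z < x : left far zone
            have hzA : z ∈ Ico a x := ⟨hz.1, hzx⟩
            have hs := hslope_ge z hzA
            rw [slope_def_field] at hs
            have hneg : z - x < 0 := by linarith
            have hnum : M z - M x ≤ Dm * (z - x) := by
              rw [le_div_iff_of_neg hneg] at hs
              linarith
            have hdist : r < x - z := by
              rw [abs_of_neg (by linarith : z - x < 0)] at hcase
              linarith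
            have hLz : L z = M x - δ + m * (z - x) := by simp only [hLdef]; ring
            have hFzM : F z ≤ M z := hFleM z hz
            rw [hLz]
            nlinarith [hδgap, hdist, hcon]
          · -- z > x : right far zone
            have hzB : z ∈ Ioc x b := ⟨hzx, hz.2⟩
            have hs := hslope_le z hzB
            rw [slope_def_field] at hs
            have hpos : 0 < z - x := by linarith
            have hnum : M z - M x ≤ Dp * (z - x) := by
              rw [div_le_iff₀ hpos] at hs
              linarith
            have hdist : r < z - x := by
              rw [abs_of_pos (by linarith : (0:ℝ) < z - x)] at hcase
              linarith
            have hLz : L z = M x - δ + m * (z - x) := by simp only [hLdef]; ring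
            have hFzM : F z ≤ M z := hFleM z hz
            rw [hLz]
            nlinarith [hδgap, hdist, hcon]
      have hGconc : ConcaveOn ℝ (Icc a b) (M ⊓ L) := hMconc.inf hLconc
      have hMle : M x ≤ (M ⊓ L) x :=
        lcm_le hGconc (fun z hz => by simpa [Pi.inf_apply] using hmaj z hz) hxI
      have hLxval : L x = M x - δ := by simp only [hLdef]; ring
      rw [Pi.inf_apply, hLxval] at hMle
      have : M x ≤ M x - δ := hMle.trans (min_le_right _ _)
      linarith
    · -- contact point: squeeze with F
      have hdF : HasDerivAt F (deriv F x) x := (hFdiff x hx).hasDerivAt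
      have htends : Tendsto (slope F x) (𝓝[≠] x) (𝓝 (deriv F x)) :=
        hasDerivAt_iff_tendsto_slope.1 hdF
      have h1 : deriv F x ≤ Dp := by
        refine le_of_tendsto (htends.mono_left
          (nhdsWithin_mono x fun y hy => (mem_Ioi.1 hy).ne')) ?_
        filter_upwards [Ioc_mem_nhdsGT_of_mem (⟨le_refl x, hx.2⟩ : x ∈ Ico x b)] with z hz
        have hzx : 0 < z - x := by linarith [hz.1]
        have hFz : F z ≤ M z := hFleM z ⟨hxI.1.trans hz.1.le, hz.2⟩
        have hslF : slope F x z ≤ slope M x z := by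
          rw [slope_def_field, slope_def_field]
          gcongr
          linarith [heq]
        exact hslF.trans (hslope_le z hz)
      have h2 : Dm ≤ deriv F x := by
        refine ge_of_tendsto (htends.mono_left
          (nhdsWithin_mono x fun y hy => (mem_Iio.1 hy).ne)) ?_
        filter_upwards [Ico_mem_nhdsLT_of_mem (⟨hx.1, le_refl x⟩ : x ∈ Ioc a x)] with w hw
        have hwx : 0 < x - w := by linarith [hw.2]
        have hFw : F w ≤ M w := hFleM w ⟨hw.1, hw.2.le.trans hxI.2⟩
        have hslF : slope M x w ≤ slope F x w := by
          rw [slope_comm, slope_comm F, slope_def_field, slope_def_field]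
          gcongr
          linarith [heq]
        exact (hslope_ge w hw).trans hslF
      linarith
  have hEq : Dm = Dp := le_antisymm hkey hDpDm
  refine ⟨Dp, ?_⟩
  rw [hasDerivAt_iff_tendsto_slope, ← nhdsLT_sup_nhdsGT, tendsto_sup]
  constructor
  · -- from the left, slopes tend to Dm = Dp
    rw [← hEq]
    refine tendsto_order.2 ⟨fun l hl => ?_, fun uu huu => ?_⟩
    · filter_upwards [Ico_mem_nhdsLT_of_mem (⟨hx.1, le_refl x⟩ : x ∈ Ioc a x)] with w hw
      exact hl.trans_le (hslope_ge w hw)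
    · obtain ⟨p, hp, hpuu⟩ := exists_lt_of_csInf_lt hAne huu
      obtain ⟨w₀, hw₀, rfl⟩ := hp
      filter_upwards [Ioo_mem_nhdsLT_of_mem (⟨hw₀.2, le_refl x⟩ : x ∈ Ioc w₀ x)] with w hw
      have hwA : w ∈ Ico a x := ⟨hw₀.1.trans hw.1.le, hw.2⟩
      exact (hanti (hmemA w₀ hw₀) (hmemA w hwA) hw.1.le).trans_lt hpuu
  · refine tendsto_order.2 ⟨fun l hl => ?_, fun uu huu => ?_⟩
    · obtain ⟨q, hq, hquu⟩ := exists_lt_of_lt_csSup hBne hl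
      obtain ⟨z₀, hz₀, rfl⟩ := hq
      filter_upwards [Ioo_mem_nhdsGT_of_mem (⟨le_refl x, hz₀.1⟩ : x ∈ Ico x z₀)] with z hz
      have hzB : z ∈ Ioc x b := ⟨hz.1, hz.2.le.trans hz₀.2⟩
      exact hquu.trans_le (hanti (hmemB z hzB) (hmemB z₀ hz₀) hz.2.le)
    · filter_upwards [Ioc_mem_nhdsGT_of_mem (⟨le_refl x, hx.2⟩ : x ∈ Ico x b)] with z hz
      exact (hslope_le z hz).trans_lt huu

lemma continuousOn_of_antitoneOn_deriv {f g : ℝ → ℝ} {s : Set ℝ} (hs : IsOpen s)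
    (hd : ∀ x ∈ s, HasDerivAt f (g x) x) (hanti : AntitoneOn g s) :
    ContinuousOn g s := by
  intro x hx
  refine ContinuousAt.continuousWithinAt ?_
  obtain ⟨ε, hε, hball⟩ := Metric.isOpen_iff.1 hs x hx
  set u := x - ε/2 with hu
  set v := x + ε/2 with hv
  have hux : u < x := by simp [hu]; linarith
  have hxv : x < v := by simp [hv]; linarith
  have hsub : Icc u v ⊆ s := by
    intro z hz
    apply hball
    rw [Metric.mem_ball, Real.dist_eq]
    have : |z - x| ≤ ε/2 := abs_le.2 ⟨by simp [hu] at hz; linarith [hz.1], by simp [hv] at hz; linarith [hz.2]⟩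
    linarith
  have hsubl : Icc u x ⊆ s := fun z hz => hsub ⟨hz.1, hz.2.trans hxv.le⟩
  have hsubr : Icc x v ⊆ s := fun z hz => hsub ⟨hux.le.trans hz.1, hz.2⟩
  have hmono : MonotoneOn (fun z => -g z) s := fun z hz w hw h => neg_le_neg (hanti hz hw h)
  have hus : u ∈ s := hsubl ⟨le_refl u, hux.le⟩
  have hvs : v ∈ s := hsubr ⟨hxv.le, le_refl v⟩
  have hsn : s ∈ 𝓝 x := hs.mem_nhds hx
  rw [continuousAt_iff_continuous_left_right]
  constructor
  · -- left continuity
    rcases eq_or_lt_of_le (hanti hus hx hux.le) with heq | hlt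
    · -- g constant on [u, x]
      have hev : ∀ᶠ z in 𝓝[≤] x, g z = g x := by
        filter_upwards [Icc_mem_nhdsLE_of_mem (⟨hux, le_refl x⟩ : x ∈ Ioc u x)] with z hz
        exact le_antisymm (heq ▸ hanti hus (hsubl hz) hz.1) (hanti (hsubl hz) hx hz.2)
      exact (continuousWithinAt_const (b := g x)).congr_of_eventuallyEq hev rfl
    · have key : ∀ β < -g x, ∃ c ∈ s, -g c ∈ Ioo β (-g x) := by
        intro β hβ
        have hβ' : g x < -β := by linarith
        have hmin : g x < min (g u) (-β) := lt_min hlt hβ'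
        set m := (g x + min (g u) (-β))/2 with hm
        have hm1 : g x < m := by simp [hm]; linarith
        have hm2 : m < min (g u) (-β) := by simp only [hm]; linarith
        have hder : ∀ z ∈ Icc u x, HasDerivWithinAt f (g z) (Icc u x) z :=
          fun z hz => (hd z (hsubl hz)).hasDerivWithinAt
        obtain ⟨c, hc, hgc⟩ := exists_hasDerivWithinAt_eq_of_lt_of_gt hux.le hder
          (lt_of_lt_of_le hm2 (min_le_left _ _)) hm1
        refine ⟨c, hsubl (Ioo_subset_Icc_self hc), ?_⟩
        have hmβ : m < -β := lt_of_lt_of_le hm2 (min_le_right _ _)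
        rw [hgc]
        exact ⟨by linarith, by linarith⟩
      have hcont := continuousWithinAt_left_of_monotoneOn_of_exists_between hmono
        (mem_nhdsWithin_of_mem_nhds hsn) key
      have := hcont.neg
      simpa [Pi.neg_def] using this
  · -- right continuity
    rcases eq_or_lt_of_le (hanti hx hvs hxv.le) with heq | hlt
    · have hev : ∀ᶠ z in 𝓝[≥] x, g z = g x := by
        filter_upwards [Icc_mem_nhdsGE_of_mem (⟨le_refl x, hxv⟩ : x ∈ Ico x v)] with z hz
        exact le_antisymm (hanti hx (hsubr hz) hz.1) (heq ▸ hanti (hsubr hz) hvs hz.2)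
      exact (continuousWithinAt_const (b := g x)).congr_of_eventuallyEq hev rfl
    · have key : ∀ β > -g x, ∃ c ∈ s, -g c ∈ Ioo (-g x) β := by
        intro β hβ
        have hβ' : -β < g x := by linarith
        have hmax : max (g v) (-β) < g x := max_lt hlt hβ'
        set m := (g x + max (g v) (-β))/2 with hm
        have hm1 : m < g x := by simp [hm]; linarith
        have hm2 : max (g v) (-β) < m := by simp only [hm]; linarith
        have hder : ∀ z ∈ Icc x v, HasDerivWithinAt f (g z) (Icc x v) z :=
          fun z hz => (hd z (hsubr hz)).hasDerivWithinAt
        obtain ⟨c, hc, hgc⟩ := exists_hasDerivWithinAt_eq_of_lt_of_gt hxv.le hder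
          hm1 (lt_of_le_of_lt (le_max_left _ _) hm2)
        refine ⟨c, hsubr (Ioo_subset_Icc_self hc), ?_⟩
        have hmβ : -β < m := lt_of_le_of_lt (le_max_right _ _) hm2
        rw [hgc]
        exact ⟨by linarith, by linarith⟩
      have hcont := continuousWithinAt_right_of_monotoneOn_of_exists_between hmono
        (mem_nhdsWithin_of_mem_nhds hsn) key
      have := hcont.neg
      simpa [Pi.neg_def] using this

end LCMaux


open LCMaux in
theorem stmt4 (a b : ℝ) (hab : a < b) (F : ℝ → ℝ)
    (hF : ContinuousOn F (Set.Icc a b))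
    (hFdiff : ∀ x ∈ Set.Ioo a b, DifferentiableAt ℝ F x)
    (hF'cont : ContinuousOn (deriv F) (Set.Ioo a b)) :
    ContinuousOn (deriv (leastConcaveMajorant a b F)) (Set.Ioo a b) := by
  set M := leastConcaveMajorant a b F with hMdef
  have hex : ∀ x ∈ Ioo a b, ∃ d, HasDerivAt M d x := lcm_exists_hasDerivAt hab hF hFdiff
  have hdiff : ∀ x ∈ Ioo a b, DifferentiableAt ℝ M x := by
    intro x hx
    obtain ⟨d, hd⟩ := hex x hx
    exact hd.differentiableAt
  have hd : ∀ x ∈ Ioo a b, HasDerivAt M (deriv M x) x := fun x hx => (hdiff x hx).hasDerivAt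
  have hanti : AntitoneOn (deriv M) (Ioo a b) :=
    ((concaveOn_lcm hab.le hF).subset Ioo_subset_Icc_self (convex_Ioo a b)).antitoneOn_deriv hdiff
  exact continuousOn_of_antitoneOn_deriv isOpen_Ioo hd hanti
end

section
/- Let F be a continuous real-valued function on [a,b] with maximum value M, let D = {x ∈ [a,b] : F(x) = M}, and let C = [c1,c2] be the smallest closed interval containing D. Then the least concave majorant F̂ satisfies F̂ ≡ M on C, F̂ is strictly increasing on (a,c1), and F̂ is strictly decreasing on (c2,b). -/
open Set

/-- The set over which the infimum is taken. -/
def majSet (a b : ℝ) (F : ℝ → ℝ) (x : ℝ) : Set ℝ :=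
  {y : ℝ | ∃ G : ℝ → ℝ, ConcaveOn ℝ (Set.Icc a b) G ∧
    (∀ z ∈ Set.Icc a b, F z ≤ G z) ∧ y = G x}

lemma lcm_eq (a b : ℝ) (F : ℝ → ℝ) (x : ℝ) :
    leastConcaveMajorant a b F x = sInf (majSet a b F x) := rfl

theorem stmt5 (a b : ℝ) (hab : a < b) (F : ℝ → ℝ)
    (hF : ContinuousOn F (Set.Icc a b))
    (M : ℝ) (hM : ∀ x ∈ Set.Icc a b, F x ≤ M)
    (D : Set ℝ) (hD : D = {x ∈ Set.Icc a b | F x = M}) (hDne : D.Nonempty)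
    (c1 c2 : ℝ) (hc1 : c1 = sInf D) (hc2 : c2 = sSup D) :
    (∀ x ∈ Set.Icc c1 c2, leastConcaveMajorant a b F x = M) ∧
    StrictMonoOn (leastConcaveMajorant a b F) (Set.Ioo a c1) ∧
    StrictAntiOn (leastConcaveMajorant a b F) (Set.Ioo c2 b) := by
  set H := leastConcaveMajorant a b F with hHdef
  -- Basic facts about the majorant sets
  have hmem : ∀ x : ℝ, M ∈ majSet a b F x := by
    intro x
    exact ⟨fun _ => M, concaveOn_const M (convex_Icc a b), fun z hz => hM z hz, rfl⟩
  have hne : ∀ x : ℝ, (majSet a b F x).Nonempty := fun x => ⟨M, hmem x⟩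
  have hbdd : ∀ x ∈ Set.Icc a b, BddBelow (majSet a b F x) := by
    rintro x hx
    refine ⟨F x, ?_⟩
    rintro y ⟨G, hG, hmaj, rfl⟩
    exact hmaj x hx
  have hHle : ∀ (G : ℝ → ℝ), ConcaveOn ℝ (Set.Icc a b) G →
      (∀ z ∈ Set.Icc a b, F z ≤ G z) → ∀ x ∈ Set.Icc a b, H x ≤ G x := by
    intro G hG hmaj x hx
    exact csInf_le (hbdd x hx) ⟨G, hG, hmaj, rfl⟩
  have hHM : ∀ x ∈ Set.Icc a b, H x ≤ M := by
    intro x hx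
    exact csInf_le (hbdd x hx) (hmem x)
  -- Facts about D, c1, c2
  have hDclosed : IsClosed D := by
    rw [hD]
    exact hF.preimage_isClosed_of_isClosed isClosed_Icc (isClosed_singleton (x := M))
  have hDsub : D ⊆ Set.Icc a b := by rw [hD]; exact fun x hx => hx.1
  have hDbb : BddBelow D := BddBelow.mono hDsub bddBelow_Icc
  have hDba : BddAbove D := BddAbove.mono hDsub bddAbove_Icc
  have hc1D : c1 ∈ D := by rw [hc1]; exact hDclosed.csInf_mem hDne hDbb
  have hc2D : c2 ∈ D := by rw [hc2]; exact hDclosed.csSup_mem hDne hDba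
  have hc12 : c1 ≤ c2 := by rw [hc1, hc2]; exact csInf_le_csSup hDne hDbb hDba
  have hc1ab : c1 ∈ Set.Icc a b := hDsub hc1D
  have hc2ab : c2 ∈ Set.Icc a b := hDsub hc2D
  have hFc1 : F c1 = M := by have := hD ▸ hc1D; exact this.2
  have hFc2 : F c2 = M := by have := hD ▸ hc2D; exact this.2
  have hc1lb : ∀ x ∈ D, c1 ≤ x := by rw [hc1]; exact fun x hx => csInf_le hDbb hx
  have hc2ub : ∀ x ∈ D, x ≤ c2 := by rw [hc2]; exact fun x hx => le_csSup hDba hx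
  -- concavity of H
  have hHcon : ConcaveOn ℝ (Set.Icc a b) H := by
    refine ⟨convex_Icc a b, ?_⟩
    intro p hp q hq tp tq htp htq hts
    apply le_csInf (hne _)
    rintro y ⟨G, hG, hmaj, rfl⟩
    have h1 : H p ≤ G p := hHle G hG hmaj p hp
    have h2 : H q ≤ G q := hHle G hG hmaj q hq
    calc tp • H p + tq • H q ≤ tp • G p + tq • G q := by
          simp only [smul_eq_mul]; nlinarith
      _ ≤ G (tp • p + tq • q) := hG.2 hp hq htp htq hts
  -- Part 1 : H = M on [c1, c2]
  have part1 : ∀ x ∈ Set.Icc c1 c2, H x = M := by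
    intro x hx
    have hxab : x ∈ Set.Icc a b := ⟨hc1ab.1.trans hx.1, hx.2.trans hc2ab.2⟩
    refine le_antisymm (hHM x hxab) ?_
    apply le_csInf (hne x)
    rintro y ⟨G, hG, hmaj, rfl⟩
    have hseg : x ∈ segment ℝ c1 c2 := by rw [segment_eq_Icc hc12]; exact hx
    have := hG.ge_on_segment hc1ab hc2ab hseg
    have hG1 : M ≤ G c1 := hFc1 ▸ hmaj c1 hc1ab
    have hG2 : M ≤ G c2 := hFc2 ▸ hmaj c2 hc2ab
    calc M ≤ min (G c1) (G c2) := le_min hG1 hG2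
      _ ≤ G x := this
  -- H < M strictly to the left of c1
  have hltL : ∀ x, a ≤ x → x < c1 → H x < M := by
    intro x hax hxc1
    set x₀ : ℝ := (x + c1) / 2 with hx₀def
    have hxx₀ : x < x₀ := by rw [hx₀def]; linarith
    have hx₀c1 : x₀ < c1 := by rw [hx₀def]; linarith
    have hax₀ : a < x₀ := lt_of_le_of_lt hax hxx₀
    have hx₀b : x₀ ≤ b := le_of_lt (lt_of_lt_of_le hx₀c1 hc1ab.2)
    -- max of F on [a, x₀]
    obtain ⟨z₀, hz₀, hmax⟩ := IsCompact.exists_isMaxOn isCompact_Icc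
      (Set.nonempty_Icc.2 hax₀.le)
      (hF.mono (Set.Icc_subset_Icc le_rfl hx₀b))
    have hm₀ : F z₀ < M := by
      refine lt_of_le_of_ne (hM z₀ ⟨hz₀.1, hz₀.2.trans hx₀b⟩) ?_
      intro h
      have : z₀ ∈ D := by rw [hD]; exact ⟨⟨hz₀.1, hz₀.2.trans hx₀b⟩, h⟩
      exact absurd (hc1lb z₀ this) (not_le.2 (lt_of_le_of_lt hz₀.2 hx₀c1))
    set k : ℝ := (M - F z₀) / (x₀ - a) with hkdef
    have hk : 0 < k := div_pos (by linarith) (by linarith)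
    have hka : k * (x₀ - a) = M - F z₀ :=
      div_mul_cancel₀ _ (by linarith : x₀ - a ≠ 0)
    set G : ℝ → ℝ := fun z => min M (M + k * (z - x₀)) with hGdef
    have hGcon : ConcaveOn ℝ (Set.Icc a b) G := by
      refine ⟨convex_Icc a b, ?_⟩
      intro p hp q hq tp tq htp htq hts
      simp only [hGdef, smul_eq_mul]
      apply le_min
      · calc tp * min M (M + k * (p - x₀)) + tq * min M (M + k * (q - x₀))
            ≤ tp * M + tq * M := by gcongr <;> exact min_le_left _ _
          _ = M := by linear_combination M * hts
      · calc tp * min M (M + k * (p - x₀)) + tq * min M (M + k * (q - x₀))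
            ≤ tp * (M + k * (p - x₀)) + tq * (M + k * (q - x₀)) := by
              gcongr <;> exact min_le_right _ _
          _ = M + k * (tp * p + tq * q - x₀) := by
              linear_combination (M - k * x₀) * hts
    have hGmaj : ∀ z ∈ Set.Icc a b, F z ≤ G z := by
      intro z hz
      refine le_min (hM z hz) ?_
      rcases le_or_gt z x₀ with h | h
      · have hFz : F z ≤ F z₀ := hmax ⟨hz.1, h⟩
        have := mul_le_mul_of_nonneg_left (by linarith [hz.1] : x₀ - z ≤ x₀ - a) hk.le
        linarith
      · have := mul_nonneg hk.le (by linarith : (0:ℝ) ≤ z - x₀)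
        linarith [hM z hz]
    have hxab : x ∈ Set.Icc a b := ⟨hax, le_of_lt (lt_of_lt_of_le hxc1 hc1ab.2)⟩
    have h1 : H x ≤ G x := hHle G hGcon hGmaj x hxab
    have h2 : G x < M := by
      rw [hGdef]
      simp only
      have : M + k * (x - x₀) < M := by nlinarith
      exact lt_of_le_of_lt (min_le_right _ _) this
    exact lt_of_le_of_lt h1 h2
  -- H < M strictly to the right of c2
  have hltR : ∀ x, c2 < x → x ≤ b → H x < M := by
    intro x hc2x hxb
    set x₀ : ℝ := (c2 + x) / 2 with hx₀def
    have hxx₀ : x₀ < x := by rw [hx₀def]; linarith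
    have hc2x₀ : c2 < x₀ := by rw [hx₀def]; linarith
    have hx₀b : x₀ < b := lt_of_lt_of_le hxx₀ hxb
    have hax₀ : a ≤ x₀ := le_of_lt (lt_of_le_of_lt hc2ab.1 hc2x₀)
    obtain ⟨z₀, hz₀, hmax⟩ := IsCompact.exists_isMaxOn isCompact_Icc
      (Set.nonempty_Icc.2 hx₀b.le)
      (hF.mono (Set.Icc_subset_Icc hax₀ le_rfl))
    have hm₀ : F z₀ < M := by
      refine lt_of_le_of_ne (hM z₀ ⟨hax₀.trans hz₀.1, hz₀.2⟩) ?_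
      intro h
      have : z₀ ∈ D := by rw [hD]; exact ⟨⟨hax₀.trans hz₀.1, hz₀.2⟩, h⟩
      exact absurd (hc2ub z₀ this) (not_le.2 (lt_of_lt_of_le hc2x₀ hz₀.1))
    set k : ℝ := (M - F z₀) / (b - x₀) with hkdef
    have hk : 0 < k := div_pos (by linarith) (by linarith)
    have hka : k * (b - x₀) = M - F z₀ :=
      div_mul_cancel₀ _ (by linarith : b - x₀ ≠ 0)
    set G : ℝ → ℝ := fun z => min M (M - k * (z - x₀)) with hGdef
    have hGcon : ConcaveOn ℝ (Set.Icc a b) G := by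
      refine ⟨convex_Icc a b, ?_⟩
      intro p hp q hq tp tq htp htq hts
      simp only [hGdef, smul_eq_mul]
      apply le_min
      · calc tp * min M (M - k * (p - x₀)) + tq * min M (M - k * (q - x₀))
            ≤ tp * M + tq * M := by gcongr <;> exact min_le_left _ _
          _ = M := by linear_combination M * hts
      · calc tp * min M (M - k * (p - x₀)) + tq * min M (M - k * (q - x₀))
            ≤ tp * (M - k * (p - x₀)) + tq * (M - k * (q - x₀)) := by
              gcongr <;> exact min_le_right _ _
          _ = M - k * (tp * p + tq * q - x₀) := by
              linear_combination (M + k * x₀) * hts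
    have hGmaj : ∀ z ∈ Set.Icc a b, F z ≤ G z := by
      intro z hz
      refine le_min (hM z hz) ?_
      rcases le_or_gt x₀ z with h | h
      · have hFz : F z ≤ F z₀ := hmax ⟨h, hz.2⟩
        have := mul_le_mul_of_nonneg_left (by linarith [hz.2] : z - x₀ ≤ b - x₀) hk.le
        linarith
      · have := mul_nonneg hk.le (by linarith : (0:ℝ) ≤ x₀ - z)
        nlinarith [hM z hz]
    have hxab : x ∈ Set.Icc a b := ⟨le_of_lt (lt_of_le_of_lt hc2ab.1 hc2x), hxb⟩
    have h1 : H x ≤ G x := hHle G hGcon hGmaj x hxab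
    have h2 : G x < M := by
      rw [hGdef]
      simp only
      have : M - k * (x - x₀) < M := by nlinarith
      exact lt_of_le_of_lt (min_le_right _ _) this
    exact lt_of_le_of_lt h1 h2
  have hHc1 : H c1 = M := part1 c1 ⟨le_rfl, hc12⟩
  have hHc2 : H c2 = M := part1 c2 ⟨hc12, le_rfl⟩
  refine ⟨part1, ?_, ?_⟩
  · -- StrictMonoOn on (a, c1)
    intro x hx y hy hxy
    have hxab : x ∈ Set.Icc a b := ⟨hx.1.le, (hx.2.trans_le hc1ab.2).le⟩
    have hyab : y ∈ Set.Icc a b := ⟨hy.1.le, (hy.2.trans_le hc1ab.2).le⟩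
    have hHx : H x < M := hltL x hx.1.le hx.2
    set tq : ℝ := (y - x) / (c1 - x) with htqdef
    set tp : ℝ := (c1 - y) / (c1 - x) with htpdef
    have hden : (0:ℝ) < c1 - x := by linarith [hx.2]
    have htq : 0 < tq := div_pos (by linarith) hden
    have htp : 0 ≤ tp := div_nonneg (by linarith [hy.2]) hden.le
    have hts : tp + tq = 1 := by
      rw [htpdef, htqdef]; field_simp; ring
    have hcomb : tp • x + tq • c1 = y := by
      simp only [smul_eq_mul, htpdef, htqdef]; field_simp; ring
    have := hHcon.2 hxab hc1ab htp htq.le hts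
    rw [hcomb, hHc1] at this
    simp only [smul_eq_mul] at this
    have e : tp * H x + tq * M = H x + tq * (M - H x) := by linear_combination (H x) * hts
    rw [e] at this
    have := mul_pos htq (sub_pos.2 hHx)
    linarith
  · -- StrictAntiOn on (c2, b)
    intro x hx y hy hxy
    have hxab : x ∈ Set.Icc a b := ⟨hc2ab.1.trans hx.1.le, hx.2.le⟩
    have hyab : y ∈ Set.Icc a b := ⟨hc2ab.1.trans hy.1.le, hy.2.le⟩
    have hHy : H y < M := hltR y hy.1 hy.2.le
    set tq : ℝ := (y - x) / (y - c2) with htqdef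
    set tp : ℝ := (x - c2) / (y - c2) with htpdef
    have hden : (0:ℝ) < y - c2 := by linarith [hy.1]
    have htq : 0 < tq := div_pos (by linarith) hden
    have htp : 0 ≤ tp := div_nonneg (by linarith [hx.1]) hden.le
    have hts : tp + tq = 1 := by
      rw [htpdef, htqdef]; field_simp; ring
    have hcomb : tp • y + tq • c2 = x := by
      simp only [smul_eq_mul, htpdef, htqdef]; field_simp; ring
    have := hHcon.2 hyab hc2ab htp htq.le hts
    rw [hcomb, hHc2] at this
    simp only [smul_eq_mul] at this
    have e : tp * H y + tq * M = H y + tq * (M - H y) := by linear_combination (H y) * hts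
    rw [e] at this
    have := mul_pos htq (sub_pos.2 hHy)
    linarith
end

section
/- Let P_L(x) = A x³ + B x² + C x + D and P_R(x) = W x³ + X x² + Y x + Z be real cubic polynomials with A W ≠ 0. Suppose a1 < b1 are real numbers and y0 is a real number such that P_L'(a1) = y0, P_R'(b1) = y0, and y0 = (P_R(b1) − P_L(a1))/(b1 − a1). Define γ = 3A y0 + B² − 3AC, δ = 3W y0 + X² − 3WY, μ2 = −2γ/(27A²), μ3 = 2δ/(27W²), and μ1 = (1/3)(X/W − B/A) y0 + (Z + 2X³/(27W²) − YX/(3W)) − (D + 2B³/(27A²) − BC/(3A)). Assume also that a1 = (−B + √γ)/(3A) or a1 = (−B − √γ)/(3A), and b1 = (−X + √δ)/(3W) or b1 = (−X − √δ)/(3W), with γ ≥ 0 and δ ≥ 0. Then y0 satisfies the sextic equation (μ1² − μ2² γ − μ3² δ)² − 4 μ2² μ3² γ δ = 0. -/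
open Real

lemma stmt10_aux (m1 m2 m3 s t e1 e2 : ℝ) (he1 : e1 = 1 ∨ e1 = -1)
    (he2 : e2 = 1 ∨ e2 = -1) (h : m1 = e1 * m2 * s + e2 * m3 * t) :
    (m1 ^ 2 - m2 ^ 2 * s ^ 2 - m3 ^ 2 * t ^ 2) ^ 2
      - 4 * m2 ^ 2 * m3 ^ 2 * s ^ 2 * t ^ 2 = 0 := by
  rcases he1 with rfl | rfl <;> rcases he2 with rfl | rfl <;> subst h <;> ring

theorem stmt10 (A B C D W X Y Z : ℝ) (hAW : A * W ≠ 0)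
    (a1 b1 y0 : ℝ) (hab : a1 < b1)
    (PL PR : ℝ → ℝ)
    (hPL : ∀ x, PL x = A * x ^ 3 + B * x ^ 2 + C * x + D)
    (hPR : ∀ x, PR x = W * x ^ 3 + X * x ^ 2 + Y * x + Z)
    (hL' : 3 * A * a1 ^ 2 + 2 * B * a1 + C = y0)
    (hR' : 3 * W * b1 ^ 2 + 2 * X * b1 + Y = y0)
    (hslope : y0 = (PR b1 - PL a1) / (b1 - a1))
    (γ δ μ1 μ2 μ3 : ℝ)
    (hγ : γ = 3 * A * y0 + B ^ 2 - 3 * A * C)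
    (hδ : δ = 3 * W * y0 + X ^ 2 - 3 * W * Y)
    (hμ2 : μ2 = -(2 * γ) / (27 * A ^ 2))
    (hμ3 : μ3 = 2 * δ / (27 * W ^ 2))
    (hμ1 : μ1 = (1 / 3) * (X / W - B / A) * y0 +
      (Z + 2 * X ^ 3 / (27 * W ^ 2) - Y * X / (3 * W)) -
      (D + 2 * B ^ 3 / (27 * A ^ 2) - B * C / (3 * A)))
    (hγ0 : 0 ≤ γ) (hδ0 : 0 ≤ δ)
    (ha1 : a1 = (-B + Real.sqrt γ) / (3 * A) ∨ a1 = (-B - Real.sqrt γ) / (3 * A))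
    (hb1 : b1 = (-X + Real.sqrt δ) / (3 * W) ∨ b1 = (-X - Real.sqrt δ) / (3 * W)) :
    (μ1 ^ 2 - μ2 ^ 2 * γ - μ3 ^ 2 * δ) ^ 2 - 4 * μ2 ^ 2 * μ3 ^ 2 * γ * δ = 0 := by
  have hA : A ≠ 0 := left_ne_zero_of_mul hAW
  have hW : W ≠ 0 := right_ne_zero_of_mul hAW
  set sγ := Real.sqrt γ with hsγdef
  set sδ := Real.sqrt δ with hsδdef
  have hsγ2 : sγ ^ 2 = γ := Real.sq_sqrt hγ0
  have hsδ2 : sδ ^ 2 = δ := Real.sq_sqrt hδ0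
  have hne : b1 - a1 ≠ 0 := sub_ne_zero_of_ne hab.ne'
  rw [eq_div_iff hne] at hslope
  have hmul2 : PR b1 - y0 * b1 = PL a1 - y0 * a1 := by linear_combination -hslope
  obtain ⟨e1, he1, ha'⟩ : ∃ e1 : ℝ, (e1 = 1 ∨ e1 = -1) ∧ 3 * A * a1 = -B + e1 * sγ := by
    rcases ha1 with h | h
    · exact ⟨1, Or.inl rfl, by rw [h]; field_simp⟩
    · exact ⟨-1, Or.inr rfl, by rw [h]; field_simp; ring⟩
  obtain ⟨e2, he2, hb'⟩ : ∃ e2 : ℝ, (e2 = 1 ∨ e2 = -1) ∧ 3 * W * b1 = -X + e2 * sδ := by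
    rcases hb1 with h | h
    · exact ⟨1, Or.inl rfl, by rw [h]; field_simp⟩
    · exact ⟨-1, Or.inr rfl, by rw [h]; field_simp; ring⟩
  have hL2 : 9 * A * (PL a1 - y0 * a1)
      = 9 * A * D + B * (y0 - C) + a1 * (6 * A * (C - y0) - 2 * B ^ 2) := by
    rw [hPL]; linear_combination (3 * A * a1 + B) * hL'
  have hR2 : 9 * W * (PR b1 - y0 * b1)
      = 9 * W * Z + X * (y0 - Y) + b1 * (6 * W * (Y - y0) - 2 * X ^ 2) := by
    rw [hPR]; linear_combination (3 * W * b1 + X) * hR'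
  have hL3 : 27 * A ^ 2 * (PL a1 - y0 * a1)
      = 27 * A ^ 2 * D + 9 * A * B * y0 - 9 * A * B * C + 2 * B ^ 3 - 2 * e1 * γ * sγ := by
    linear_combination 3 * A * hL2 + (2 * A * (C - y0) - (2 / 3) * B ^ 2 - (4 / 3) * γ) * ha'
      + (2 * e1 * sγ + 4 * A * a1 - (4 / 3) * e1 * sγ + (4 / 3) * B) * hγ
  have hR3 : 27 * W ^ 2 * (PR b1 - y0 * b1)
      = 27 * W ^ 2 * Z + 9 * W * X * y0 - 9 * W * X * Y + 2 * X ^ 3 - 2 * e2 * δ * sδ := by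
    linear_combination 3 * W * hR2 + (2 * W * (Y - y0) - (2 / 3) * X ^ 2 - (4 / 3) * δ) * hb'
      + (2 * e2 * sδ + 4 * W * b1 - (4 / 3) * e2 * sδ + (4 / 3) * X) * hδ
  have hμ1' : 27 * A ^ 2 * W ^ 2 * μ1
      = 9 * A ^ 2 * W * X * y0 - 9 * A * B * W ^ 2 * y0 + 27 * A ^ 2 * W ^ 2 * Z
        + 2 * A ^ 2 * X ^ 3 - 9 * A ^ 2 * W * Y * X
        - 27 * A ^ 2 * W ^ 2 * D - 2 * W ^ 2 * B ^ 3 + 9 * A * W ^ 2 * B * C := by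
    rw [hμ1]; field_simp; ring
  have hμ2' : 27 * A ^ 2 * μ2 = -(2 * γ) := by rw [hμ2]; field_simp
  have hμ3' : 27 * W ^ 2 * μ3 = 2 * δ := by rw [hμ3]; field_simp
  have h27 : (27 : ℝ) * (A ^ 2 * W ^ 2) ≠ 0 := by positivity
  have hkey : 27 * (A ^ 2 * W ^ 2) * (μ1 - (e1 * μ2 * sγ + e2 * μ3 * sδ)) = 0 := by
    linear_combination hμ1' - A ^ 2 * hR3 + W ^ 2 * hL3 + 27 * A ^ 2 * W ^ 2 * hmul2
      - e1 * sγ * W ^ 2 * hμ2' - e2 * sδ * A ^ 2 * hμ3'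
  have hkeyμ : μ1 = e1 * μ2 * sγ + e2 * μ3 * sδ := by
    have := (mul_eq_zero.mp hkey).resolve_left h27
    linarith
  rw [← hsγ2, ← hsδ2]
  exact stmt10_aux μ1 μ2 μ3 sγ sδ e1 e2 he1 he2 hkeyμ
end

section
/- Let F be differentiable on [a,b] with F' integrable, so that F(v) − F(u) = ∫_u^v F'(t) dt for all u,v in [a,b]. Let R ⊆ [a,b] be an interval on which F is strictly concave and increasing. Suppose I = (a1,b1) and J = (a2,b2) are bridge intervals of F with b1 ∈ R, b2 ∈ R, I ∩ J ≠ ∅, and b1 < b2. Then a2 < a1. -/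
open Set intervalIntegral

/-- `(α, β)` is a bridge interval for `F` on `[a, b]`: the chord over `(α, β)`
strictly majorizes `F` inside the interval, and the slope of the chord matches
`F'` at each endpoint (the derivative condition being omitted at an endpoint of
`[a, b]`). -/
def IsBridgeInterval (a b : ℝ) (F : ℝ → ℝ) (α β : ℝ) : Prop :=
  a ≤ α ∧ α < β ∧ β ≤ b ∧
  (∀ x ∈ Set.Ioo α β, F x < F α + (x - α) * (F β - F α) / (β - α)) ∧
  (α = a ∨ deriv F α = (F β - F α) / (β - α)) ∧
  (β = b ∨ deriv F β = (F β - F α) / (β - α))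

theorem stmt11 (a b : ℝ) (hab : a < b) (F : ℝ → ℝ)
    (hFdiff : ∀ x ∈ Set.Icc a b, DifferentiableAt ℝ F x)
    (hFTC : ∀ u ∈ Set.Icc a b, ∀ v ∈ Set.Icc a b,
      F v - F u = ∫ t in u..v, deriv F t)
    (hint : IntervalIntegrable (deriv F) MeasureTheory.volume a b)
    (r1 r2 : ℝ) (hR : Set.Icc r1 r2 ⊆ Set.Icc a b)
    (hconc : StrictConcaveOn ℝ (Set.Icc r1 r2) F)
    (hmono : StrictMonoOn F (Set.Icc r1 r2))
    (a1 b1 a2 b2 : ℝ)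
    (hI : IsBridgeInterval a b F a1 b1)
    (hJ : IsBridgeInterval a b F a2 b2)
    (hb1R : b1 ∈ Set.Icc r1 r2) (hb2R : b2 ∈ Set.Icc r1 r2)
    (hmeet : (Set.Ioo a1 b1 ∩ Set.Ioo a2 b2).Nonempty)
    (hb : b1 < b2) :
    a2 < a1 := by
  by_contra h
  push_neg at h
  obtain ⟨x, ⟨hxa1, hxb1⟩, ⟨hxa2, _⟩⟩ := hmeet
  obtain ⟨ha1, ha1b1, hb1b, hIchord, _, hIdb⟩ := hI
  obtain ⟨ha2, ha2b2, hb2b, hJchord, _, _⟩ := hJ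
  have ha2b1 : a2 < b1 := hxa2.trans hxb1
  -- slope of the first chord
  set s1 : ℝ := (F b1 - F a1) / (b1 - a1) with hs1
  set s2 : ℝ := (F b2 - F a2) / (b2 - a2) with hs2
  have hd1 : (0 : ℝ) < b1 - a1 := by linarith
  have hd2 : (0 : ℝ) < b2 - a2 := by linarith
  have hb1ne : b1 ≠ b := by linarith
  have hderiv : deriv F b1 = s1 := hIdb.resolve_left hb1ne
  -- tangent line inequality from strict concavity at b1
  have hA : F b2 - F b1 < (b2 - b1) * s1 := by
    have := hconc.slope_lt_deriv hb1R hb2R hb (hFdiff b1 (hR hb1R))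
    rw [slope_def_field, hderiv, div_lt_iff₀ (by linarith : (0:ℝ) < b2 - b1)] at this
    linarith [this]
  -- b1 lies strictly below the chord of J
  have hB : F b1 - F a2 < (b1 - a2) * s2 := by
    have h2 := hJchord b1 ⟨ha2b1, hb⟩
    have h3 : (b1 - a2) * s2 = (b1 - a2) * (F b2 - F a2) / (b2 - a2) := by
      rw [hs2, mul_div_assoc]
    linarith
  -- a2 lies (weakly) below the chord of I
  have hC : F a2 - F a1 ≤ (a2 - a1) * s1 := by
    rcases eq_or_lt_of_le h with heq | hlt
    · rw [← heq]; simp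
    · have h2 := hIchord a2 ⟨hlt, ha2b1⟩
      have h3 : (a2 - a1) * s1 = (a2 - a1) * (F b1 - F a1) / (b1 - a1) := by
        rw [hs1, mul_div_assoc]
      linarith
  have hE : F b1 - F a1 = (b1 - a1) * s1 := by
    rw [hs1]; field_simp
  have hE2 : F b2 - F a2 = (b2 - a2) * s2 := by
    rw [hs2]; field_simp
  -- s1 < s2 from the left end
  have h1 : s1 < s2 := by
    have hlhs : (b1 - a2) * s1 ≤ F b1 - F a2 := by nlinarith [hE, hC]
    have : (b1 - a2) * s1 < (b1 - a2) * s2 := lt_of_le_of_lt hlhs hB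
    exact lt_of_mul_lt_mul_left this (by linarith)
  -- s2 < s1 from the right end
  have h2 : s2 < s1 := by
    have : (b2 - b1) * s2 < (b2 - b1) * s1 := by nlinarith [hE2, hB, hA]
    exact lt_of_mul_lt_mul_left this (by linarith)
  linarith
end

section
/- Let F be continuous on [a,b] with maximum value M, and suppose c1 ∈ (a,b] is a point with F(c1) = M such that F is concave on [a,c1]. Then the least concave majorant F̂ of F satisfies F̂(x) = F(x) for all x ∈ [a,c1]. (Indeed, the function m defined by m(t) = F(t) for t ∈ [a,c1] and m(t) = M for t ∈ (c1,b] is a concave majorant of F on [a,b].) -/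
open Set

theorem stmt17 (a b : ℝ) (hab : a < b) (F : ℝ → ℝ)
    (hF : ContinuousOn F (Set.Icc a b))
    (M : ℝ) (hM : ∀ x ∈ Set.Icc a b, F x ≤ M)
    (c1 : ℝ) (hc1 : c1 ∈ Set.Ioc a b) (hc1M : F c1 = M)
    (hconc : ConcaveOn ℝ (Set.Icc a c1) F) :
    ∀ x ∈ Set.Icc a c1, leastConcaveMajorant a b F x = F x := by
  obtain ⟨hac1, hc1b⟩ := hc1
  have hMc1 : ∀ t ∈ Icc a c1, F t ≤ M := fun t ht => hM t ⟨ht.1, ht.2.trans hc1b⟩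
  -- F is nondecreasing on [a, c1]
  have hmono : ∀ s ∈ Icc a c1, ∀ t ∈ Icc a c1, s ≤ t → F s ≤ F t := by
    intro s hs t ht hst
    rcases eq_or_lt_of_le hs.2 with h | h
    · have : t = s := le_antisymm (ht.2.trans h.symm.le) hst
      rw [this]
    · -- s < c1 ; write t = λ s + μ c1
      set l : ℝ := (c1 - t) / (c1 - s) with hl
      set u : ℝ := (t - s) / (c1 - s) with hu
      have hcs : (0:ℝ) < c1 - s := by linarith
      have hl0 : 0 ≤ l := div_nonneg (by linarith [ht.2]) hcs.le
      have hu0 : 0 ≤ u := div_nonneg (by linarith) hcs.le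
      have hlu : l + u = 1 := by
        rw [hl, hu, ← add_div]
        field_simp
        ring
      have hcomb : l • s + u • c1 = t := by
        rw [smul_eq_mul, smul_eq_mul, hl, hu, div_mul_eq_mul_div, div_mul_eq_mul_div,
          ← add_div, div_eq_iff hcs.ne']
        ring
      have h0 := hconc.2 hs (⟨by linarith, le_refl c1⟩ : c1 ∈ Icc a c1) hl0 hu0 hlu
      rw [hcomb] at h0
      have hFs : F s ≤ M := hMc1 s hs
      have h1 : l * F s + u * F c1 ≤ F t := by simpa [smul_eq_mul] using h0
      have h2 : F s = l * F s + u * F s := by rw [← add_mul, hlu, one_mul]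
      have h3 : u * F s ≤ u * F c1 :=
        mul_le_mul_of_nonneg_left (by rw [hc1M]; exact hFs) hu0
      linarith
  -- the majorant m
  set m : ℝ → ℝ := fun t => F (min t c1) with hm
  have hmem : ∀ t ∈ Icc a b, min t c1 ∈ Icc a c1 := fun t ht =>
    ⟨le_min ht.1 hac1.le, min_le_right _ _⟩
  have hm_conc : ConcaveOn ℝ (Icc a b) m := by
    refine ⟨convex_Icc a b, ?_⟩
    intro p hp q hq α β hα hβ hαβ
    have hp' := hmem p hp
    have hq' := hmem q hq
    have hz : α • p + β • q ∈ Icc a b := (convex_Icc a b) hp hq hα hβ hαβ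
    have hz' := hmem _ hz
    have hcomb : α • min p c1 + β • min q c1 ∈ Icc a c1 :=
      (convex_Icc a c1) hp' hq' hα hβ hαβ
    have h1 : α • min p c1 + β • min q c1 ≤ min (α • p + β • q) c1 := by
      apply le_min
      · simp only [smul_eq_mul]
        have h1 := mul_le_mul_of_nonneg_left (min_le_left p c1) hα
        have h2 := mul_le_mul_of_nonneg_left (min_le_left q c1) hβ
        linarith
      · simp only [smul_eq_mul]
        have h1 := mul_le_mul_of_nonneg_left (min_le_right p c1) hα
        have h2 := mul_le_mul_of_nonneg_left (min_le_right q c1) hβ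
        have h3 : α * c1 + β * c1 = c1 := by rw [← add_mul, hαβ, one_mul]
        linarith
    calc α • m p + β • m q ≤ F (α • min p c1 + β • min q c1) :=
          hconc.2 hp' hq' hα hβ hαβ
      _ ≤ F (min (α • p + β • q) c1) := hmono _ hcomb _ hz' h1
      _ = m (α • p + β • q) := rfl
  have hm_maj : ∀ t ∈ Icc a b, F t ≤ m t := by
    intro t ht
    rcases le_or_gt t c1 with h | h
    · simp [hm, min_eq_left h]
    · have : m t = M := by simp [hm, min_eq_right h.le, hc1M]
      rw [this]; exact hM t ht
  intro x hx
  have hxab : x ∈ Icc a b := ⟨hx.1, hx.2.trans hc1b⟩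
  have hmx : m x = F x := by simp [hm, min_eq_left hx.2]
  apply le_antisymm
  · refine csInf_le ⟨F x, ?_⟩ ⟨m, hm_conc, hm_maj, hmx.symm⟩
    rintro y ⟨G, hG, hGmaj, rfl⟩
    exact hGmaj x hxab
  · refine le_csInf ⟨m x, m, hm_conc, hm_maj, rfl⟩ ?_
    rintro y ⟨G, hG, hGmaj, rfl⟩
    exact hGmaj x hxab
end
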